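/- Let A be the linear automaton over Σ = {a, b, c, d} with states q0, q1, q2, q3, initial state q0, Büchi-accepting state q3, and transitions q0 --a--> q0, q0 --b--> q0, q0 --a--> q1, q0 --b--> q2, q1 --c--> q3, q2 --d--> q3, q3 --a--> q3, q3 --b--> q3. Then no linear automaton A' is a 1-token ghost of A; in particular, the class of linear automata is not closed under 1-token ghost. -/

import Mathlib

/-- A labelled transition system over alphabet `Al`; `none` labels are ε-transitions.
`Acc` is the set of accepting infinite runs (as infinite sequences of transitions). -/
structure LTS (Al : Type) where
  St : Type
  init : St
  Tr : St → Option Al → St → Prop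
  Acc : (ℕ → St × Option Al × St) → Prop

namespace LTS

variable {Al : Type}

/-- `Path M q l q'` : the list `l` of transitions is a valid path of `M` from `q` to `q'`. -/
def Path (M : LTS Al) : M.St → List (M.St × Option Al × M.St) → M.St → Prop
  | q, [], q' => q = q'
  | q, t :: l, q' => t.1 = q ∧ M.Tr t.1 t.2.1 t.2.2 ∧ Path M t.2.2 l q'

/-- The finite word read along a list of transitions (ε-labels removed). -/
def wordOf {S : Type} (l : List (S × Option Al × S)) : List Al :=
  l.filterMap (fun t => t.2.1)

/-- A transition sequence over the single letter `σ` from `q` to `q'`: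
one `σ`-labelled transition together with finitely many ε-transitions. -/
def SeqOver (M : LTS Al) (q : M.St) (σ : Al) (l : List (M.St × Option Al × M.St))
    (q' : M.St) : Prop :=
  M.Path q l q' ∧ wordOf l = [σ]

/-- An infinite run of `M` from the initial state. -/
def IsRun (M : LTS Al) (ρ : ℕ → M.St × Option Al × M.St) : Prop :=
  (ρ 0).1 = M.init ∧ ∀ n, M.Tr (ρ n).1 (ρ n).2.1 (ρ n).2.2 ∧ (ρ (n + 1)).1 = (ρ n).2.2

/-- `ρ` is a (transition-)sequence on the infinite word `w`: the subsequence of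
non-ε labels of `ρ` is exactly `w`. -/
def RunOn {S : Type} (ρ : ℕ → S × Option Al × S) (w : ℕ → Al) : Prop :=
  ∃ φ : ℕ → ℕ, StrictMono φ ∧ (∀ i, (ρ (φ i)).2.1 = some (w i)) ∧
    ∀ n, (ρ n).2.1 ≠ none → ∃ i, φ i = n

/-- The language of infinite words of `M`. -/
def Lang (M : LTS Al) : Set (ℕ → Al) :=
  { w | ∃ ρ, M.IsRun ρ ∧ RunOn ρ w ∧ M.Acc ρ }

/-- `ρ` is the concatenation of the blocks `ms`. -/
def IsFlatten {T : Type} (ms : ℕ → List T) (ρ : ℕ → T) : Prop :=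
  ∃ b : ℕ → ℕ, b 0 = 0 ∧ (∀ i, b (i + 1) = b i + (ms i).length) ∧
    ∀ i j (h : j < (ms i).length), ρ (b i + j) = (ms i).get ⟨j, h⟩

/-- The concatenation of the blocks `ms` is an accepting run-sequence of `M`. -/
def FlatAcc (M : LTS Al) (ms : ℕ → List (M.St × Option Al × M.St)) : Prop :=
  ∃ ρ, IsFlatten ms ρ ∧ M.Acc ρ

/-- The moves `em` (one transition sequence per round) form a run of `M` from the
initial state on the letters `w`. -/
def ValidMoves (M : LTS Al) (w : ℕ → Al) (em : ℕ → List (M.St × Option Al × M.St)) : Prop :=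
  ∃ q : ℕ → M.St, q 0 = M.init ∧ ∀ i, M.SeqOver (q i) (w i) (em i) (q (i + 1))

/-- `B.Simulates M` : Eve (playing in `B`) has a winning strategy in the simulation game
`Sim(B, M)` against Adam (playing in `M`): in each round Adam picks a letter and a
transition sequence in `M` over it, then Eve picks a transition sequence in `B` over it;
Eve wins if her run is accepting or Adam's run is rejecting. -/
def Simulates (B M : LTS Al) : Prop :=
  ∃ st : List (Al × List (M.St × Option Al × M.St)) → List (B.St × Option Al × B.St),
    ∀ am : ℕ → Al × List (M.St × Option Al × M.St),
      M.ValidMoves (fun i => (am i).1) (fun i => (am i).2) →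
        ¬ M.FlatAcc (fun i => (am i).2) ∨
          (B.ValidMoves (fun i => (am i).1)
              (fun i => st (List.ofFn fun j : Fin (i + 1) => am j.1)) ∧
            B.FlatAcc (fun i => st (List.ofFn fun j : Fin (i + 1) => am j.1)))

/-- `M.HD` : Eve has a winning strategy in the letter game on `M`
(history-determinism): Adam picks letters, Eve picks transition sequences, and Eve
wins if the word is not in the language of `M` or her run is accepting. -/
def HD (M : LTS Al) : Prop :=
  ∃ st : List Al → List (M.St × Option Al × M.St),
    ∀ w : ℕ → Al, w ∈ M.Lang →
      M.ValidMoves w (fun i => st (List.ofFn fun j : Fin (i + 1) => w j.1)) ∧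
      M.FlatAcc (fun i => st (List.ofFn fun j : Fin (i + 1) => w j.1))

/-- `G1Win B M` : Eve (playing in `B`) has a winning strategy in the one-token game
`G1(B, M)` against Adam (playing in `M`): in each round Adam picks a letter, Eve picks a
transition sequence in `B` over it, then Adam picks a transition sequence in `M` over it;
Eve wins if her run is accepting or Adam's run is rejecting. -/
def G1Win (B M : LTS Al) : Prop :=
  ∃ st : List (Al × List (M.St × Option Al × M.St)) → Al → List (B.St × Option Al × B.St),
    ∀ am : ℕ → Al × List (M.St × Option Al × M.St),
      M.ValidMoves (fun i => (am i).1) (fun i => (am i).2) →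
        B.ValidMoves (fun i => (am i).1)
          (fun i => st (List.ofFn fun j : Fin i => am j.1) (am i).1) ∧
        (B.FlatAcc (fun i => st (List.ofFn fun j : Fin i => am j.1) (am i).1) ∨
          ¬ M.FlatAcc (fun i => (am i).2))

/-- `B` is a 1-token ghost of `M`. -/
def Ghost1 (B M : LTS Al) : Prop := B.Lang = M.Lang ∧ G1Win B M

/-- `M` is guidable with respect to the class `C` : `M` simulates every member of `C`
whose language is contained in that of `M`. -/
def Guidable (M : LTS Al) (C : Set (LTS Al)) : Prop :=
  ∀ B ∈ C, B.Lang ⊆ M.Lang → M.Simulates B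

/-- A deterministic LTS: no ε-transitions and at most one transition per state and letter. -/
def Deterministic (M : LTS Al) : Prop :=
  (∀ q q', ¬ M.Tr q none q') ∧
    ∀ q a q₁ q₂, M.Tr q (some a) q₁ → M.Tr q (some a) q₂ → q₁ = q₂

end LTS

/-- A Büchi automaton over alphabet `Al`: no ε-transitions, accepting states `F`
(finiteness of the state space is stated separately). -/
structure Buchi (Al : Type) where
  Q : Type
  init : Q
  Tr : Q → Al → Q → Prop
  F : Set Q

namespace Buchi

variable {Al : Type}

/-- The LTS induced by a Büchi automaton: an infinite run is accepting iff it visits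
accepting states infinitely often. -/
def toLTS (B : Buchi Al) : LTS Al where
  St := B.Q
  init := B.init
  Tr := fun q x q' => ∃ σ, x = some σ ∧ B.Tr q σ q'
  Acc := fun ρ => ∀ N, ∃ n ≥ N, (ρ n).1 ∈ B.F

/-- `BPath B q l q'` : the list `l` of letter-labelled transitions is a path from `q` to `q'`. -/
def BPath (B : Buchi Al) : B.Q → List (B.Q × Al × B.Q) → B.Q → Prop
  | q, [], q' => q = q'
  | q, t :: l, q' => t.1 = q ∧ B.Tr t.1 t.2.1 t.2.2 ∧ BPath B t.2.2 l q'

/-- A linear (very weak) automaton: every cycle is a self-loop. -/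
def IsLinear (B : Buchi Al) : Prop :=
  ∀ q l, l ≠ [] → B.BPath q l q → ∀ t ∈ l, t.1 = q ∧ t.2.2 = q

end Buchi

/-- The four-letter alphabet `{a, b, c, d}`. -/
inductive ABCD where
  | a | b | c | d
deriving DecidableEq

open ABCD

/-- The linear automaton of Figure 2: states `q0, q1, q2, q3` (as `Fin 4`), initial state
`q0`, Büchi-accepting state `q3`, with transitions
`q0 -a,b-> q0`, `q0 -a-> q1`, `q0 -b-> q2`, `q1 -c-> q3`, `q2 -d-> q3`, `q3 -a,b-> q3`. -/
def exA : Buchi ABCD where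
  Q := Fin 4
  init := 0
  Tr := fun q x q' =>
    (q = 0 ∧ q' = 0 ∧ (x = a ∨ x = b)) ∨
    (q = 0 ∧ q' = 1 ∧ x = a) ∨
    (q = 0 ∧ q' = 2 ∧ x = b) ∨
    (q = 1 ∧ q' = 3 ∧ x = c) ∨
    (q = 2 ∧ q' = 3 ∧ x = d) ∨
    (q = 3 ∧ q' = 3 ∧ (x = a ∨ x = b))
  F := {3}

instance : Fintype ABCD := ⟨{a, b, c, d}, fun x => by cases x <;> simp⟩

section Aux

open ABCD

private def rk : Fin 4 → ℕ := ![0, 1, 1, 2]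

private lemma exA_step : ∀ q q' : Fin 4, ∀ σ : ABCD, exA.Tr q σ q' →
    rk q ≤ rk q' ∧ (rk q = rk q' → q = q') := by
  show ∀ q q' : Fin 4, ∀ σ : ABCD,
    ((q = 0 ∧ q' = 0 ∧ (σ = a ∨ σ = b)) ∨
    (q = 0 ∧ q' = 1 ∧ σ = a) ∨
    (q = 0 ∧ q' = 2 ∧ σ = b) ∨
    (q = 1 ∧ q' = 3 ∧ σ = c) ∨
    (q = 2 ∧ q' = 3 ∧ σ = d) ∨
    (q = 3 ∧ q' = 3 ∧ (σ = a ∨ σ = b))) → rk q ≤ rk q' ∧ (rk q = rk q' → q = q')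
  decide

private lemma exA_path_le : ∀ (l : List (Fin 4 × ABCD × Fin 4)) q q', exA.BPath q l q' → rk q ≤ rk q'
  | [], q, q', h => le_of_eq (congrArg rk h)
  | t :: l, q, q', h => by
    obtain ⟨h1, h2, h3⟩ := h
    exact h1 ▸ le_trans (exA_step t.1 t.2.2 t.2.1 h2).1 (exA_path_le l t.2.2 q' h3)

private lemma exA_loops : ∀ (l : List (Fin 4 × ABCD × Fin 4)) q q', exA.BPath q l q' → rk q' ≤ rk q →
    ∀ t ∈ l, t.1 = q ∧ t.2.2 = q
  | [], _, _, _, _, t, ht => by cases ht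
  | t :: l, q, q', h, hle, s, hs => by
    obtain ⟨h1, h2, h3⟩ := h
    subst h1
    have hst := exA_step t.1 t.2.2 t.2.1 h2
    have hpl := exA_path_le l t.2.2 q' h3
    have heq : t.2.2 = t.1 := (hst.2 (le_antisymm hst.1 (le_trans hpl hle))).symm
    cases hs with
    | head => exact ⟨rfl, heq⟩
    | tail _ hs => exact exA_loops l t.1 q' (heq ▸ h3) hle s hs

lemma exA_linear : exA.IsLinear := by
  intro q l _ hp t ht
  exact exA_loops l q q hp le_rfl t ht

end Aux

section Aux2

variable {Al : Type} {B : Buchi Al}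

/-- a transition-sequence over one letter in a Büchi LTS is a single transition -/
lemma seqOver_single {q q' : B.Q} {σ : Al} {l : List (B.Q × Option Al × B.Q)}
    (h : B.toLTS.SeqOver q σ l q') : l = [(q, some σ, q')] ∧ B.Tr q σ q' := by
  obtain ⟨hp, hw⟩ := h
  change List.filterMap (fun t : B.Q × Option Al × B.Q => t.2.1) l = [σ] at hw
  match l with
  | [] => exact absurd hw (by simp [LTS.wordOf])
  | t :: l' =>
    obtain ⟨h1, h2, h3⟩ := hp
    obtain ⟨τ, hτ, htr⟩ := h2
    simp only [LTS.wordOf, List.filterMap_cons, hτ] at hw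
    match l' with
    | [] =>
      simp only [List.filterMap_nil] at hw
      have hτσ : τ = σ := by injection hw
      have h3' : t.2.2 = q' := h3
      refine ⟨?_, ?_⟩
      · have : t = (t.1, t.2.1, t.2.2) := rfl
        rw [this, h1, hτ, hτσ, h3']
      · rw [← h1, ← hτσ, ← h3']; exact htr
    | s :: l'' =>
      obtain ⟨g1, g2, g3⟩ := h3
      obtain ⟨τ', hτ', _⟩ := g2
      exfalso
      simp only [List.filterMap_cons, hτ'] at hw
      have := congrArg List.length hw
      simp at this
lemma seqOver_of_tr {q q' : B.Q} {σ : Al} (h : B.Tr q σ q') :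
    B.toLTS.SeqOver q σ [(q, some σ, q')] q' :=
  ⟨⟨rfl, ⟨σ, rfl, h⟩, rfl⟩, by simp [LTS.wordOf]⟩

/-- a chain of transitions gives a BPath -/
lemma bpath_ofFn (f : ℕ → B.Q) (σs : ℕ → Al) :
    ∀ k : ℕ, (∀ j < k, B.Tr (f j) (σs j) (f (j + 1))) →
      B.BPath (f 0) (List.ofFn (fun j : Fin k => (f j, σs j, f (j + 1)))) (f k)
  | 0, _ => rfl
  | k + 1, h => by
    rw [List.ofFn_succ]
    refine ⟨rfl, h 0 (Nat.succ_pos k), ?_⟩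
    have := bpath_ofFn (fun j => f (j + 1)) (fun j => σs (j + 1)) k
      (fun j hj => h (j + 1) (by omega))
    simpa using this

/-- in a finite linear automaton, any infinite run eventually only self-loops -/
lemma linear_eventually_const [Finite B.Q] (hLin : B.IsLinear) (q : ℕ → B.Q) (σs : ℕ → Al)
    (hstep : ∀ i, B.Tr (q i) (σs i) (q (i + 1))) :
    ∃ N, ∀ n ≥ N, q (n + 1) = q n := by
  set S : Set ℕ := {n | q (n + 1) ≠ q n} with hS
  have key : ∀ m n, m < n → n ∈ S → q (m + 1) = q (n + 1) → False := by
    intro m n hmn hn hqe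
    have hbp := bpath_ofFn (fun j => q (m + 1 + j)) (fun j => σs (m + 1 + j)) (n - m)
      (fun j _ => hstep (m + 1 + j))
    have hend : m + 1 + (n - m) = n + 1 := by omega
    rw [hend, ← hqe] at hbp
    have hne' : List.ofFn (fun j : Fin (n - m) =>
        (q (m + 1 + ↑j), σs (m + 1 + ↑j), q (m + 1 + (↑j + 1)))) ≠ [] := by
      simp only [ne_eq, List.ofFn_eq_nil_iff]
      omega
    have hmem : (q (m + 1 + (n - m - 1)), σs (m + 1 + (n - m - 1)), q (m + 1 + ((n - m - 1) + 1))) ∈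
        List.ofFn (fun j : Fin (n - m) =>
          (q (m + 1 + ↑j), σs (m + 1 + ↑j), q (m + 1 + (↑j + 1)))) :=
      List.mem_ofFn.mpr ⟨⟨n - m - 1, by omega⟩, rfl⟩
    have hloop := hLin _ _ hne' hbp _ hmem
    have e1 : m + 1 + (n - m - 1) = n := by omega
    have e2 : m + 1 + ((n - m - 1) + 1) = n + 1 := by omega
    simp only at hloop
    rw [e1, e2] at hloop
    exact hn (hloop.2.trans hloop.1.symm)
  have hinj : Set.InjOn (fun n => q (n + 1)) S := by
    intro m hm n hn hqe
    simp only at hqe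
    rcases lt_trichotomy m n with h | h | h
    · exact absurd (key m n h hn hqe) not_false
    · exact h
    · exact absurd (key n m h hm hqe.symm) not_false
  have hfin : S.Finite := Set.Finite.of_finite_image (Set.toFinite _) hinj
  obtain ⟨N, hN⟩ := hfin.bddAbove
  refine ⟨N + 1, fun n hn => by_contra fun h => ?_⟩
  have : n ≤ N := hN h
  omega

/-- a strictly monotone surjection ℕ → ℕ is the identity -/
lemma strictMono_surj_id (φ : ℕ → ℕ) (hmono : StrictMono φ) (hsurj : ∀ m, ∃ i, φ i = m) :
    ∀ m, φ m = m := by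
  intro m
  induction m using Nat.strong_induction_on with
  | _ m ih =>
    obtain ⟨i, hi⟩ := hsurj m
    rcases lt_trichotomy i m with h | h | h
    · exact absurd (ih i h ▸ hi) (by omega)
    · exact h ▸ hi
    · have h1 := hmono h
      have h2 : m ≤ φ m := hmono.le_apply
      omega

end Aux2

section Main

open ABCD

private lemma exA_tr00 : ∀ x : ABCD, x = a ∨ x = b → exA.Tr (0 : Fin 4) x (0 : Fin 4) :=
  fun _ h => Or.inl ⟨rfl, rfl, h⟩

private lemma exA_tr01 : exA.Tr (0 : Fin 4) a (1 : Fin 4) := Or.inr (Or.inl ⟨rfl, rfl, rfl⟩)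
private lemma exA_tr13 : exA.Tr (1 : Fin 4) c (3 : Fin 4) := Or.inr (Or.inr (Or.inr (Or.inl ⟨rfl, rfl, rfl⟩)))
private lemma exA_tr33 : exA.Tr (3 : Fin 4) a (3 : Fin 4) := Or.inr (Or.inr (Or.inr (Or.inr (Or.inr ⟨rfl, rfl, Or.inl rfl⟩))))

private lemma exA_c_src : ∀ s s' : Fin 4, exA.Tr s c s' → s = 1 := by
  show ∀ s s' : Fin 4,
    ((s = 0 ∧ s' = 0 ∧ (c = a ∨ c = b)) ∨
    (s = 0 ∧ s' = 1 ∧ c = a) ∨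
    (s = 0 ∧ s' = 2 ∧ c = b) ∨
    (s = 1 ∧ s' = 3 ∧ c = c) ∨
    (s = 2 ∧ s' = 3 ∧ c = d) ∨
    (s = 3 ∧ s' = 3 ∧ (c = a ∨ c = b))) → s = 1
  decide

private lemma exA_b_ne1 : ∀ s s' : Fin 4, exA.Tr s b s' → s' ≠ 1 := by
  show ∀ s s' : Fin 4,
    ((s = 0 ∧ s' = 0 ∧ (b = a ∨ b = b)) ∨
    (s = 0 ∧ s' = 1 ∧ b = a) ∨
    (s = 0 ∧ s' = 2 ∧ b = b) ∨
    (s = 1 ∧ s' = 3 ∧ b = c) ∨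
    (s = 2 ∧ s' = 3 ∧ b = d) ∨
    (s = 3 ∧ s' = 3 ∧ (b = a ∨ b = b))) → s' ≠ 1
  decide

/-- baseline letters: alternating a, b -/
private def w0 : ℕ → ABCD := fun k => if k % 2 = 0 then a else b

private lemma w0_ab (k : ℕ) : w0 k = a ∨ w0 k = b := by
  unfold w0; split <;> simp

/-- Adam's moves in the deviated play with deviation point n: states -/
private def st1 (n i : ℕ) : Fin 4 := if i ≤ n then 0 else if i = n + 1 then 1 else 3

/-- letters of the deviated play -/
private def lt1 (n i : ℕ) : ABCD := if i ≤ n then w0 i else if i = n + 1 then c else a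

/-- Adam's moves in the deviated play -/
private def am1 (n i : ℕ) : ABCD × List ((Fin 4) × Option ABCD × (Fin 4)) :=
  (lt1 n i, [(st1 n i, some (lt1 n i), st1 n (i + 1))])

/-- the word witnessing the contradiction -/
private def uu (n k : ℕ) : ABCD := if k < n then w0 k else if k = n then c else a

private lemma exA_tr1 (n : ℕ) (hn : n % 2 = 0) (i : ℕ) :
    exA.Tr (st1 n i) (lt1 n i) (st1 n (i + 1)) := by
  rcases lt_trichotomy i n with h | h | h
  · have e1 : st1 n i = 0 := if_pos (le_of_lt h)
    have e2 : st1 n (i + 1) = 0 := if_pos (by omega)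
    have e3 : lt1 n i = w0 i := if_pos (le_of_lt h)
    rw [e1, e2, e3]; exact exA_tr00 _ (w0_ab i)
  · subst h
    have e1 : st1 i i = 0 := if_pos le_rfl
    have e2 : st1 i (i + 1) = 1 := by unfold st1; rw [if_neg (by omega), if_pos rfl]
    have e3 : lt1 i i = a := by
      unfold lt1; rw [if_pos le_rfl]; unfold w0; rw [if_pos hn]
    rw [e1, e2, e3]; exact exA_tr01
  · rcases Nat.eq_or_lt_of_le h with h' | h'
    · have e1 : st1 n i = 1 := by unfold st1; rw [if_neg (by omega), if_pos (by omega)]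
      have e2 : st1 n (i + 1) = 3 := by unfold st1; rw [if_neg (by omega), if_neg (by omega)]
      have e3 : lt1 n i = c := by unfold lt1; rw [if_neg (by omega), if_pos (by omega)]
      rw [e1, e2, e3]; exact exA_tr13
    · have e1 : st1 n i = 3 := by unfold st1; rw [if_neg (by omega), if_neg (by omega)]
      have e2 : st1 n (i + 1) = 3 := by unfold st1; rw [if_neg (by omega), if_neg (by omega)]
      have e3 : lt1 n i = a := by unfold lt1; rw [if_neg (by omega), if_neg (by omega)]
      rw [e1, e2, e3]; exact exA_tr33

private lemma uu_notin_exA (n : ℕ) (hn : n % 2 = 0) (hn2 : 2 ≤ n) :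
    uu n ∉ exA.toLTS.Lang := by
  rintro ⟨ρ, ⟨hinit, hstep⟩, ⟨φ, hmono, hlab, hsur⟩, -⟩
  have hid : ∀ m, φ m = m := by
    refine strictMono_surj_id φ hmono fun m => hsur m ?_
    obtain ⟨σ, hσ, -⟩ := (hstep m).1
    rw [hσ]; exact Option.some_ne_none σ
  have htr2 : ∀ m, exA.Tr (ρ m).1 (uu n m) (ρ m).2.2 := by
    intro m
    obtain ⟨σ, hσ, htr⟩ := (hstep m).1
    have := hlab m
    rw [hid m, hσ] at this
    injection this with h
    rwa [← h]
  have hun : uu n n = c := by unfold uu; rw [if_neg (by omega), if_pos rfl]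
  have h1 : (ρ n).1 = (1 : Fin 4) := exA_c_src _ _ (hun ▸ htr2 n)
  have hub : uu n (n - 1) = b := by
    unfold uu; rw [if_pos (by omega)]; unfold w0; rw [if_neg (by omega)]
  have h2 := exA_b_ne1 _ _ (hub ▸ htr2 (n - 1))
  have h3 : (ρ (n - 1 + 1)).1 = (ρ (n - 1)).2.2 := (hstep (n - 1)).2
  have e : n - 1 + 1 = n := by omega
  rw [e, h1] at h3
  exact h2 h3.symm

theorem main2 (A' : Buchi ABCD) (hFin : Finite A'.Q) (hLin : A'.IsLinear) :
    ¬ LTS.Ghost1 A'.toLTS exA.toLTS := by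
  haveI := hFin
  rintro ⟨hLang, st, hst⟩
  -- the baseline play
  set am0 : ℕ → ABCD × List ((Fin 4) × Option ABCD × (Fin 4)) :=
    fun k => (w0 k, [((0 : Fin 4), some (w0 k), (0 : Fin 4))]) with ham0
  have hv0 : exA.toLTS.ValidMoves (fun i => (am0 i).1) (fun i => (am0 i).2) :=
    ⟨fun _ => (0 : Fin 4), rfl, fun i => seqOver_of_tr (exA_tr00 _ (w0_ab i))⟩
  obtain ⟨⟨qE, hqE0, hqEs⟩, -⟩ := hst am0 hv0
  have hsingle0 : ∀ i,
      st (List.ofFn fun j : Fin i => am0 j.1) (am0 i).1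
        = [(qE i, some (w0 i), qE (i + 1))] ∧ A'.Tr (qE i) (w0 i) (qE (i + 1)) :=
    fun i => seqOver_single (hqEs i)
  obtain ⟨N, hN⟩ := linear_eventually_const hLin qE w0 (fun i => (hsingle0 i).2)
  set n := 2 * (N / 2) + 2 with hdefn
  have hne : n % 2 = 0 := by omega
  have hn2 : (2 : ℕ) ≤ n := by omega
  have hloopn : qE (n + 1) = qE n := hN n (by omega)
  -- the deviated play
  have hv1 : exA.toLTS.ValidMoves (fun i => (am1 n i).1) (fun i => (am1 n i).2) := by
    refine ⟨fun i => st1 n i, if_pos (by omega), fun i => seqOver_of_tr (exA_tr1 n hne i)⟩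
  have hAdamAcc : exA.toLTS.FlatAcc (fun i => (am1 n i).2) := by
    refine ⟨fun i => (st1 n i, some (lt1 n i), st1 n (i + 1)), ⟨fun i => i, rfl, fun i => rfl,
      fun i j hj => ?_⟩, fun M => ⟨M + n + 2, by omega, ?_⟩⟩
    · have : j = 0 := by change j < 1 at hj; omega
      subst this
      rfl
    · show st1 n (M + n + 2) ∈ exA.F
      have : st1 n (M + n + 2) = 3 := by unfold st1; rw [if_neg (by omega), if_neg (by omega)]
      rw [this]; rfl
  obtain ⟨⟨qE1, hq10, hq1s⟩, hwin⟩ := hst (am1 n) hv1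
  have hEveAcc := hwin.resolve_right (not_not_intro hAdamAcc)
  have hsingle1 : ∀ i,
      st (List.ofFn fun j : Fin i => am1 n j.1) (am1 n i).1
        = [(qE1 i, some (lt1 n i), qE1 (i + 1))] ∧ A'.Tr (qE1 i) (lt1 n i) (qE1 (i + 1)) :=
    fun i => seqOver_single (hq1s i)
  -- agreement of the two plays up to round n
  have hagree : ∀ i ≤ n, st (List.ofFn fun j : Fin i => am1 n j.1) (am1 n i).1
      = st (List.ofFn fun j : Fin i => am0 j.1) (am0 i).1 := by
    intro i hi
    have hmoves : ∀ j < n, am1 n j = am0 j := by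
      intro j hj
      have e1 : st1 n j = 0 := if_pos (by omega)
      have e2 : st1 n (j + 1) = 0 := if_pos (by omega)
      have e3 : lt1 n j = w0 j := if_pos (by omega)
      show (lt1 n j, [(st1 n j, some (lt1 n j), st1 n (j + 1))]) = _
      rw [e1, e2, e3]
    have hlist : (List.ofFn fun j : Fin i => am1 n j.1)
        = List.ofFn fun j : Fin i => am0 j.1 := by
      congr 1
      funext j
      exact hmoves j.1 (by omega)
    have hlet : (am1 n i).1 = (am0 i).1 := by
      show lt1 n i = w0 i
      exact if_pos hi
    exact congrArg₂ st hlist hlet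
  -- Eve's state agreement at round n
  have hkey := ((hsingle1 n).1.symm.trans ((hagree n le_rfl).trans (hsingle0 n).1))
  have hq1n : qE1 n = qE n ∧ qE1 (n + 1) = qE (n + 1) := by
    have := List.head_eq_of_cons_eq hkey
    exact ⟨congrArg Prod.fst this, congrArg (fun t => t.2.2) this⟩
  have hself : qE1 (n + 1) = qE1 n := by rw [hq1n.1, hq1n.2, hloopn]
  -- Eve's run is accepting
  obtain ⟨ρ, ⟨b, hb0, hbs, hbget⟩, hacc⟩ := hEveAcc
  simp only at hbs hbget
  have hbid : ∀ i, b i = i := by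
    intro i
    induction i with
    | zero => exact hb0
    | succ i ih => rw [hbs, ih, (hsingle1 i).1]; rfl
  have hρ : ∀ i, ρ i = (qE1 i, some (lt1 n i), qE1 (i + 1)) := by
    intro i
    have hlen : 0 < (st (List.ofFn fun j : Fin i => am1 n j.1) (am1 n i).1).length := by
      rw [(hsingle1 i).1]; simp
    have := hbget i 0 hlen
    rw [hbid i] at this
    simp only [Nat.add_zero] at this
    rw [this]
    have hl := (hsingle1 i).1
    rw [List.get_of_eq hl]
    rfl
  have hFstates : ∀ M, ∃ m ≥ M, qE1 m ∈ A'.F := by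
    intro M
    obtain ⟨m, hm, h⟩ := hacc M
    exact ⟨m, hm, by rwa [hρ m] at h⟩
  -- the witness run for the word uu n
  have hqS : ∀ k, A'.Tr ((fun k => if k ≤ n then qE1 k else qE1 (k + 1)) k) (uu n k)
      ((fun k => if k ≤ n then qE1 k else qE1 (k + 1)) (k + 1)) := by
    intro k
    simp only
    rcases lt_trichotomy k n with h | h | h
    · rw [if_pos (by omega : k ≤ n), if_pos (by omega : k + 1 ≤ n)]
      have e : uu n k = lt1 n k := by
        unfold uu lt1; rw [if_pos h, if_pos (by omega)]
      rw [e]; exact (hsingle1 k).2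
    · subst h
      rw [if_pos le_rfl, if_neg (by omega)]
      have e : uu n n = lt1 n (n + 1) := by
        unfold uu lt1; rw [if_neg (by omega), if_pos rfl, if_neg (by omega), if_pos rfl]
      rw [e]
      have := (hsingle1 (n + 1)).2
      rwa [hself] at this
    · rw [if_neg (by omega), if_neg (by omega)]
      have e : uu n k = lt1 n (k + 1) := by
        unfold uu lt1; rw [if_neg (by omega), if_neg (by omega), if_neg (by omega), if_neg (by omega)]
      rw [e]
      exact (hsingle1 (k + 1)).2
  have hmem : uu n ∈ A'.toLTS.Lang := by
    refine ⟨fun k => ((fun k => if k ≤ n then qE1 k else qE1 (k + 1)) k, some (uu n k),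
      (fun k => if k ≤ n then qE1 k else qE1 (k + 1)) (k + 1)), ⟨?_, fun k => ⟨⟨uu n k, rfl, hqS k⟩, rfl⟩⟩,
      ⟨id, strictMono_id, fun i => rfl, fun m _ => ⟨m, rfl⟩⟩, fun M => ?_⟩
    · show (if 0 ≤ n then qE1 0 else qE1 1) = A'.toLTS.init
      rw [if_pos (by omega)]; exact hq10
    · obtain ⟨m, hm, hF⟩ := hFstates (M + n + 2)
      refine ⟨m - 1, by omega, ?_⟩
      show (if m - 1 ≤ n then qE1 (m - 1) else qE1 (m - 1 + 1)) ∈ A'.F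
      rw [if_neg (by omega)]
      have e : m - 1 + 1 = m := by omega
      rwa [e]
  rw [hLang] at hmem
  exact uu_notin_exA n hne hn2 hmem

end Main

/-- The automaton `exA` is linear, and no linear automaton is a 1-token
ghost of it; in particular, the class of linear automata is not closed under 1-token
ghost. -/
theorem linear_not_closed_under_one_token_ghost :
    exA.IsLinear ∧
    ∀ A' : Buchi ABCD, Finite A'.Q → A'.IsLinear →
      ¬ LTS.Ghost1 A'.toLTS exA.toLTS :=
  ⟨exA_linear, main2⟩
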